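/- arXiv:2307.03621 — 2 statements merged into one kernel-verified Lean document; each statement's English description precedes it below -/
import Mathlib

section
/- Let X be a real Banach space and let 𝒜 be a compatible collection of bounded subsets of X. Suppose f₀ is an 𝒜-small combination of slice point of B_{X*}. Then for every A ∈ 𝒜 with inf f₀(A) > 0 there exist finitely many closed balls B₁, …, Bₙ in X such that A ⊆ B₁ ∪ ⋯ ∪ Bₙ and 0 ∉ B₁ ∪ ⋯ ∪ Bₙ. -/
open NormedSpace Metric Bornology Set

/-- The w*-slice of the closed unit ball of the dual determined by `x ∈ X` and `α > 0`:
`{f ∈ B_{X*} : f x > sup_{g ∈ B_{X*}} g x − α}`. -/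
noncomputable def wStarSlice (X : Type*) [NormedAddCommGroup X] [NormedSpace ℝ X]
    (x : X) (α : ℝ) : Set (StrongDual ℝ X) :=
  {f | ‖f‖ ≤ 1 ∧ sSup ((fun g : StrongDual ℝ X => g x) '' closedBall 0 1) - α < f x}

/-- `T` is a convex combination of w*-slices of `B_{X*}`. -/
noncomputable def IsConvexCombOfWStarSlices (X : Type*) [NormedAddCommGroup X]
    [NormedSpace ℝ X] (T : Set (StrongDual ℝ X)) : Prop :=
  ∃ (n : ℕ) (lam : Fin n → ℝ) (x : Fin n → X) (α : Fin n → ℝ),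
    (∀ i, 0 < lam i) ∧ (∑ i, lam i = 1) ∧ (∀ i, ‖x i‖ = 1) ∧ (∀ i, 0 < α i) ∧
    T = {g | ∃ f : Fin n → StrongDual ℝ X,
          (∀ i, f i ∈ wStarSlice X (x i) (α i)) ∧ g = ∑ i, lam i • f i}

/-- A compatible collection of bounded subsets of `X`. -/
structure IsCompatibleCollection (X : Type*) [NormedAddCommGroup X] [NormedSpace ℝ X]
    (𝒜 : Set (Set X)) : Prop where
  bounded : ∀ A ∈ 𝒜, IsBounded A
  subset_mem : ∀ A ∈ 𝒜, ∀ C ⊆ A, C ∈ 𝒜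
  translate_mem : ∀ A ∈ 𝒜, ∀ x : X, (fun a => a + x) '' A ∈ 𝒜
  union_singleton_mem : ∀ A ∈ 𝒜, ∀ x : X, A ∪ {x} ∈ 𝒜
  closedAbsConvexHull_mem : ∀ A ∈ 𝒜, closure (absConvexHull ℝ A) ∈ 𝒜

/-- `‖f − g‖_A = sup {|f x − g x| : x ∈ A}`. -/
noncomputable def normA (X : Type*) [NormedAddCommGroup X] [NormedSpace ℝ X]
    (A : Set X) (f g : StrongDual ℝ X) : ℝ :=
  sSup ((fun x => |f x - g x|) '' A)

/-- `diam_A T = sup {‖f − g‖_A : f, g ∈ T}`. -/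
noncomputable def diamA (X : Type*) [NormedAddCommGroup X] [NormedSpace ℝ X]
    (A : Set X) (T : Set (StrongDual ℝ X)) : ℝ :=
  sSup {d | ∃ f ∈ T, ∃ g ∈ T, d = normA X A f g}

/-- `f` is an `𝒜`-small combination of slice point of `B_{X*}`: for each `A ∈ 𝒜` and
`ε > 0` there is a convex combination of w*-slices `T` of `B_{X*}` with `f ∈ T` and
`diam_A T < ε`. -/
noncomputable def IsAscsPoint (X : Type*) [NormedAddCommGroup X] [NormedSpace ℝ X]
    (𝒜 : Set (Set X)) (f : StrongDual ℝ X) : Prop :=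
  ∀ A ∈ 𝒜, ∀ ε > 0, ∃ T : Set (StrongDual ℝ X),
    IsConvexCombOfWStarSlices X T ∧ f ∈ T ∧ diamA X A T < ε

lemma sSup_eval_closedBall {X : Type*} [NormedAddCommGroup X] [NormedSpace ℝ X]
    (x : X) (hx : x ≠ 0) :
    sSup ((fun g : StrongDual ℝ X => g x) '' closedBall 0 1) = ‖x‖ := by
  have hub : ∀ y ∈ (fun g : StrongDual ℝ X => g x) '' closedBall 0 1, y ≤ ‖x‖ := by
    rintro y ⟨g, hg, rfl⟩
    rw [mem_closedBall_zero_iff] at hg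
    calc g x ≤ ‖g x‖ := le_abs_self _
    _ ≤ ‖g‖ * ‖x‖ := g.le_opNorm x
    _ ≤ 1 * ‖x‖ := by gcongr
    _ = ‖x‖ := one_mul _
  apply le_antisymm
  · apply csSup_le (Set.Nonempty.image _ ⟨0, by simp⟩) hub
  · obtain ⟨g, hg1, hgx⟩ := exists_dual_vector ℝ x (norm_ne_zero_iff.2 hx)
    have : g x = ‖x‖ := by simpa using hgx
    rw [← this]
    exact le_csSup ⟨‖x‖, hub⟩ ⟨g, by simp [mem_closedBall_zero_iff, hg1.le], rfl⟩

theorem Ascs_point_ball_separation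
    (X : Type*) [NormedAddCommGroup X] [NormedSpace ℝ X] [CompleteSpace X]
    (𝒜 : Set (Set X)) (h𝒜 : IsCompatibleCollection X 𝒜)
    (f₀ : StrongDual ℝ X) (hf₀ : IsAscsPoint X 𝒜 f₀) :
    ∀ A ∈ 𝒜, 0 < sInf (⇑f₀ '' A) →
      ∃ (n : ℕ) (c : Fin n → X) (r : Fin n → ℝ), (∀ i, 0 < r i) ∧
        A ⊆ ⋃ i, closedBall (c i) (r i) ∧
        (0 : X) ∉ ⋃ i, closedBall (c i) (r i) := by
  intro A hA hδ
  set δ := sInf (⇑f₀ '' A) with hδdef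
  obtain ⟨C, hC⟩ := isBounded_iff_forall_norm_le.1 (h𝒜.bounded A hA)
  set R : ℝ := max C 0 with hRdef
  have hR0 : 0 ≤ R := le_max_right _ _
  have hRA : ∀ x ∈ A, ‖x‖ ≤ R := fun x hx => (hC x hx).trans (le_max_left _ _)
  obtain ⟨T, hT, hf₀T, hdiam⟩ := hf₀ A hA (δ/2) (by linarith)
  obtain ⟨n, lam, xs, α, hlam, hsum, hxs, hα, hTeq⟩ := hT
  -- members of T have norm ≤ 1
  have hTnorm : ∀ g ∈ T, ‖g‖ ≤ 1 := by
    intro g hg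
    rw [hTeq] at hg
    obtain ⟨f, hf, rfl⟩ := hg
    calc ‖∑ i, lam i • f i‖ ≤ ∑ i, ‖lam i • f i‖ := norm_sum_le _ _
    _ ≤ ∑ i, lam i := by
        apply Finset.sum_le_sum
        intro i _
        rw [norm_smul, Real.norm_eq_abs, abs_of_pos (hlam i)]
        calc lam i * ‖f i‖ ≤ lam i * 1 :=
              mul_le_mul_of_nonneg_left (hf i).1 (hlam i).le
        _ = lam i := mul_one _
    _ = 1 := hsum
  have hf₀norm : ‖f₀‖ ≤ 1 := hTnorm f₀ hf₀T
  -- pointwise bound on f₀ over A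
  have hf₀A : ∀ x ∈ A, δ ≤ f₀ x := by
    intro x hx
    apply csInf_le
    · refine ⟨-R, ?_⟩
      rintro y ⟨z, hz, rfl⟩
      have h1 : ‖f₀ z‖ ≤ ‖f₀‖ * ‖z‖ := f₀.le_opNorm z
      have h2 : ‖f₀‖ * ‖z‖ ≤ 1 * R := by
        apply mul_le_mul hf₀norm (hRA z hz) (norm_nonneg _) zero_le_one
      have := neg_abs_le (f₀ z)
      rw [Real.norm_eq_abs] at h1
      simp only [one_mul] at h2
      linarith
    · exact ⟨x, hx, rfl⟩
  -- diam bound: for g ∈ T, x ∈ A, f₀ x - g x < δ/2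
  have hclose : ∀ g ∈ T, ∀ x ∈ A, f₀ x - g x < δ/2 := by
    intro g hg x hx
    have hgnorm := hTnorm g hg
    have hbddA : ∀ y ∈ (fun x => |f₀ x - g x|) '' A, y ≤ 2 * R := by
      rintro y ⟨z, hz, rfl⟩
      have h1 : ‖f₀ z‖ ≤ 1 * R :=
        (f₀.le_opNorm z).trans (mul_le_mul hf₀norm (hRA z hz) (norm_nonneg _) zero_le_one)
      have h2 : ‖g z‖ ≤ 1 * R :=
        (g.le_opNorm z).trans (mul_le_mul hgnorm (hRA z hz) (norm_nonneg _) zero_le_one)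
      rw [Real.norm_eq_abs] at h1 h2
      calc |f₀ z - g z| ≤ |f₀ z| + |g z| := abs_sub _ _
      _ ≤ 2 * R := by linarith
    have h1 : f₀ x - g x ≤ normA X A f₀ g := by
      calc f₀ x - g x ≤ |f₀ x - g x| := le_abs_self _
      _ ≤ sSup ((fun x => |f₀ x - g x|) '' A) := le_csSup ⟨2 * R, hbddA⟩ ⟨x, hx, rfl⟩
      _ = normA X A f₀ g := rfl
    have h2 : normA X A f₀ g ≤ diamA X A T := by
      apply le_csSup
      · refine ⟨2 * R, ?_⟩
        rintro d ⟨f', hf', g', hg', rfl⟩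
        apply Real.sSup_le _ (by linarith)
        rintro y ⟨z, hz, rfl⟩
        have h1 : ‖f' z‖ ≤ 1 * R :=
          (f'.le_opNorm z).trans (mul_le_mul (hTnorm f' hf') (hRA z hz) (norm_nonneg _) zero_le_one)
        have h2 : ‖g' z‖ ≤ 1 * R :=
          (g'.le_opNorm z).trans (mul_le_mul (hTnorm g' hg') (hRA z hz) (norm_nonneg _) zero_le_one)
        rw [Real.norm_eq_abs] at h1 h2
        calc |f' z - g' z| ≤ |f' z| + |g' z| := abs_sub _ _
        _ ≤ 2 * R := by linarith
      · exact ⟨f₀, hf₀T, g, hg, rfl⟩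
    linarith
  -- the balls
  set r : Fin n → ℝ := fun i => (R + δ/2) / α i with hrdef
  set t : Fin n → ℝ := fun i => r i + δ/2 with htdef
  have hrpos : ∀ i, 0 < r i := fun i => div_pos (by linarith) (hα i)
  have htpos : ∀ i, 0 < t i := fun i => by have := hrpos i; simp only [htdef]; linarith
  have hta : ∀ i, R + δ/2 ≤ t i * α i := by
    intro i
    have : r i * α i = R + δ/2 := div_mul_cancel₀ _ (ne_of_gt (hα i))
    have h2 : δ/2 * α i > 0 := mul_pos (by linarith) (hα i)
    simp only [htdef]
    nlinarith
  refine ⟨n, fun i => t i • xs i, r, hrpos, ?_, ?_⟩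
  · -- coverage
    intro x hx
    by_contra hcov
    simp only [mem_iUnion, not_exists, mem_closedBall, not_le] at hcov
    have hxR := hRA x hx
    -- for each i produce a functional
    have key : ∀ i, ∃ g : StrongDual ℝ X, ‖g‖ ≤ 1 ∧ 1 - α i < g (xs i) ∧ g x < δ/2 := by
      intro i
      have hdist : r i < ‖t i • xs i - x‖ := by
        have := hcov i
        rw [dist_eq_norm, ← norm_neg] at this
        simpa [neg_sub] using this
      have hy0 : t i • xs i - x ≠ 0 := by
        intro h
        rw [h, norm_zero] at hdist
        exact absurd hdist (not_lt.2 (hrpos i).le)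
      obtain ⟨g, hg1, hgy⟩ := exists_dual_vector ℝ (t i • xs i - x) (norm_ne_zero_iff.2 hy0)
      have hgy' : g (t i • xs i - x) = ‖t i • xs i - x‖ := by simpa using hgy
      have hval : r i < t i * g (xs i) - g x := by
        have : g (t i • xs i - x) = t i * g (xs i) - g x := by
          simp [map_sub, map_smul, smul_eq_mul]
        linarith [hgy' ▸ hdist, this ▸ hgy' ▸ hdist]
      have hgx_abs : |g x| ≤ R := by
        have h1 : ‖g x‖ ≤ ‖g‖ * ‖x‖ := g.le_opNorm x
        rw [Real.norm_eq_abs, hg1] at h1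
        linarith [h1, hxR]
      have hgxs : g (xs i) ≤ 1 := by
        have h1 : ‖g (xs i)‖ ≤ ‖g‖ * ‖xs i‖ := g.le_opNorm (xs i)
        rw [Real.norm_eq_abs, hg1, hxs i, mul_one] at h1
        linarith [le_abs_self (g (xs i))]
      refine ⟨g, hg1.le, ?_, ?_⟩
      · by_contra h
        push_neg at h
        have : t i * g (xs i) ≤ t i * (1 - α i) := by
          apply mul_le_mul_of_nonneg_left h (htpos i).le
        have hti : t i * (1 - α i) = t i - t i * α i := by ring
        have := hta i
        have habs := neg_abs_le (g x)
        simp only [htdef] at *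
        nlinarith [hval]
      · have : t i * g (xs i) ≤ t i := by
          calc t i * g (xs i) ≤ t i * 1 := mul_le_mul_of_nonneg_left hgxs (htpos i).le
          _ = t i := mul_one _
        have : g x < t i - r i := by linarith
        simpa [htdef] using this
    choose gs hgs1 hgs2 hgs3 using key
    have hn : n ≠ 0 := by
      rintro rfl
      simp at hsum
    have hne : (Finset.univ : Finset (Fin n)).Nonempty := by
      rw [Finset.univ_nonempty_iff]
      exact Fin.pos_iff_nonempty.1 (Nat.pos_of_ne_zero hn)
    set g : StrongDual ℝ X := ∑ i, lam i • gs i with hgdef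
    have hgT : g ∈ T := by
      rw [hTeq]
      refine ⟨gs, fun i => ⟨hgs1 i, ?_⟩, rfl⟩
      rw [sSup_eval_closedBall (xs i) (by rw [← norm_ne_zero_iff, hxs i]; norm_num), hxs i]
      linarith [hgs2 i]
    have hgx_lt : g x < δ/2 := by
      have hg_apply : g x = ∑ i, lam i * gs i x := by
        simp [hgdef, ContinuousLinearMap.sum_apply, ContinuousLinearMap.smul_apply, smul_eq_mul]
      rw [hg_apply]
      calc ∑ i, lam i * gs i x < ∑ i, lam i * (δ/2) := by
            apply Finset.sum_lt_sum_of_nonempty hne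
            intro i _
            exact mul_lt_mul_of_pos_left (hgs3 i) (hlam i)
      _ = (∑ i, lam i) * (δ/2) := by rw [Finset.sum_mul]
      _ = δ/2 := by rw [hsum, one_mul]
    have := hclose g hgT x hx
    have := hf₀A x hx
    linarith
  · -- 0 not in the union
    simp only [mem_iUnion, not_exists, mem_closedBall, not_le]
    intro i
    rw [dist_zero_left, norm_smul, Real.norm_eq_abs, abs_of_pos (htpos i), hxs i, mul_one]
    simp only [htdef]
    linarith [hrpos i]
end

section
/- Let X be a real Banach space, let S₁, …, Sₙ be w*-slices of B_{X*}, let λ₁, …, λₙ > 0 with Σᵢ₌₁ⁿ λᵢ = 1, and let T = Σᵢ₌₁ⁿ λᵢ Sᵢ = {Σᵢ₌₁ⁿ λᵢ fᵢ : fᵢ ∈ Sᵢ}. Let C ⊆ X be a set such that inf_{x ∈ C} g(x) > 0 for every g ∈ T. Then C = ⋃ᵢ₌₁ⁿ Cᵢ, where Cᵢ = {x ∈ C : f(x) > 0 for all f ∈ Sᵢ}. -/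
open NormedSpace Metric Bornology Set

theorem convex_comb_of_slices_cover
    (X : Type*) [NormedAddCommGroup X] [NormedSpace ℝ X] [CompleteSpace X]
    (n : ℕ) (x : Fin n → X) (α lam : Fin n → ℝ)
    (hx : ∀ i, ‖x i‖ = 1) (hα : ∀ i, 0 < α i)
    (hlam : ∀ i, 0 < lam i) (hsum : ∑ i, lam i = 1)
    (T : Set (StrongDual ℝ X))
    (hT : T = {g | ∃ f : Fin n → StrongDual ℝ X,
      (∀ i, f i ∈ wStarSlice X (x i) (α i)) ∧ g = ∑ i, lam i • f i})
    (C : Set X) (hC : ∀ g ∈ T, 0 < sInf (⇑g '' C)) :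
    C = ⋃ i, {y ∈ C | ∀ f ∈ wStarSlice X (x i) (α i), 0 < f y} := by
  ext y
  simp only [mem_iUnion, mem_setOf_eq]
  constructor
  · intro hy
    by_contra h
    push_neg at h
    choose f hf hfy using fun i => h i hy
    set g : StrongDual ℝ X := ∑ i, lam i • f i with hg
    have hgT : g ∈ T := by rw [hT]; exact ⟨f, hf, rfl⟩
    have h0 := hC g hgT
    have hmem : g y ∈ ⇑g '' C := ⟨y, hy, rfl⟩
    by_cases hb : BddBelow (⇑g '' C)
    · have hle : sInf (⇑g '' C) ≤ g y := csInf_le hb hmem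
      have hgy : g y ≤ 0 := by
        have : g y = ∑ i, lam i * f i y := by
          simp [hg, ContinuousLinearMap.sum_apply]
        rw [this]
        apply Finset.sum_nonpos
        intro i _
        exact mul_nonpos_of_nonneg_of_nonpos (hlam i).le (hfy i)
      linarith
    · rw [Real.sInf_of_not_bddBelow hb] at h0
      exact lt_irrefl 0 h0
  · rintro ⟨i, hyC, _⟩
    exact hyC
end
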